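/- In the setup Σ = Σ_W + M D_π Mᵀ (Σ_W symmetric positive definite, D_π diagonal positive) with B = Σ⁻¹ M D_π, for all k, ℓ one has |μ_kᵀ B_ℓ| ≤ π_ℓ √(μ_kᵀ Σ_W⁻¹ μ_k) √(μ_ℓᵀ Σ_W⁻¹ μ_ℓ), where μ_j denotes the j-th column of M and B_ℓ the ℓ-th column of B. -/

import Mathlib

open Matrix

lemma dotCS {n : ℕ} (u v : Fin n → ℝ) :
    |u ⬝ᵥ v| ≤ Real.sqrt (u ⬝ᵥ u) * Real.sqrt (v ⬝ᵥ v) := by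
  have h := Finset.sum_mul_sq_le_sq_mul_sq Finset.univ u v
  have h1 : |u ⬝ᵥ v| = Real.sqrt ((u ⬝ᵥ v) ^ 2) := (Real.sqrt_sq_eq_abs _).symm
  have hu : 0 ≤ u ⬝ᵥ u := Finset.sum_nonneg fun i _ => mul_self_nonneg (u i)
  rw [h1, ← Real.sqrt_mul hu]
  apply Real.sqrt_le_sqrt
  simpa [dotProduct, pow_two] using h

open scoped MatrixOrder

lemma matCS {n : ℕ} {A : Matrix (Fin n) (Fin n) ℝ} (hA : A.PosSemidef) (x y : Fin n → ℝ) :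
    |x ⬝ᵥ A *ᵥ y| ≤ Real.sqrt (x ⬝ᵥ A *ᵥ x) * Real.sqrt (y ⬝ᵥ A *ᵥ y) := by
  have hsym : (CFC.sqrt A)ᵀ = CFC.sqrt A := by
    have := (Matrix.nonneg_iff_posSemidef.mp (CFC.sqrt_nonneg A)).isHermitian
    simpa [Matrix.IsHermitian, Matrix.conjTranspose_eq_transpose_of_trivial] using this
  have key : ∀ a b : Fin n → ℝ, a ⬝ᵥ A *ᵥ b = (CFC.sqrt A *ᵥ a) ⬝ᵥ (CFC.sqrt A *ᵥ b) := by
    intro a b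
    have h2 : A *ᵥ b = CFC.sqrt A *ᵥ (CFC.sqrt A *ᵥ b) := by
      rw [Matrix.mulVec_mulVec, CFC.sqrt_mul_sqrt_self A (Matrix.nonneg_iff_posSemidef.mpr hA)]
    rw [h2, Matrix.dotProduct_mulVec, ← Matrix.mulVec_transpose, hsym]
  rw [key, key, key]
  exact dotCS _ _

lemma invLe {n : ℕ} {S Sw : Matrix (Fin n) (Fin n) ℝ} (hS : S.PosDef) (hSw : Sw.PosDef)
    (hd : (S - Sw).PosSemidef) (x : Fin n → ℝ) :
    x ⬝ᵥ S⁻¹ *ᵥ x ≤ x ⬝ᵥ Sw⁻¹ *ᵥ x := by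
  set y := S⁻¹ *ᵥ x with hy
  set z := Sw⁻¹ *ᵥ x with hz
  set a := x ⬝ᵥ S⁻¹ *ᵥ x with ha
  set b := x ⬝ᵥ Sw⁻¹ *ᵥ x with hb
  have hSy : S *ᵥ y = x := by
    rw [hy, Matrix.mulVec_mulVec, Matrix.mul_nonsing_inv _ hS.det_pos.ne'.isUnit,
      Matrix.one_mulVec]
  have hSwz : Sw *ᵥ z = x := by
    rw [hz, Matrix.mulVec_mulVec, Matrix.mul_nonsing_inv _ hSw.det_pos.ne'.isUnit,
      Matrix.one_mulVec]
  have ha0 : 0 ≤ a := by simpa using hS.inv.posSemidef.dotProduct_mulVec_nonneg x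
  have hb0 : 0 ≤ b := by simpa using hSw.inv.posSemidef.dotProduct_mulVec_nonneg x
  have hySy : y ⬝ᵥ S *ᵥ y = a := by rw [hSy, dotProduct_comm, ha]
  have hzSwz : z ⬝ᵥ Sw *ᵥ z = b := by rw [hSwz, dotProduct_comm, hb]
  have hySwz : y ⬝ᵥ Sw *ᵥ z = a := by rw [hSwz, dotProduct_comm, ha]
  have hySwy_le : y ⬝ᵥ Sw *ᵥ y ≤ a := by
    have h := hd.dotProduct_mulVec_nonneg y
    simp only [star_trivial, Matrix.sub_mulVec, dotProduct_sub] at h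
    linarith [hySy ▸ h]
  have hySwy0 : 0 ≤ y ⬝ᵥ Sw *ᵥ y := by simpa using hSw.posSemidef.dotProduct_mulVec_nonneg y
  have hcs := matCS hSw.posSemidef y z
  rw [hySwz, hzSwz] at hcs
  have h1 : a ≤ Real.sqrt a * Real.sqrt b := by
    calc a ≤ |a| := le_abs_self a
    _ ≤ Real.sqrt (y ⬝ᵥ Sw *ᵥ y) * Real.sqrt b := hcs
    _ ≤ Real.sqrt a * Real.sqrt b :=
        mul_le_mul_of_nonneg_right (Real.sqrt_le_sqrt hySwy_le) (Real.sqrt_nonneg _)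
  nlinarith [Real.sq_sqrt ha0, Real.sq_sqrt hb0, Real.sqrt_nonneg a, Real.sqrt_nonneg b,
    sq_nonneg (Real.sqrt a - Real.sqrt b)]

theorem stmt_9 {p L : ℕ} (Sw : Matrix (Fin p) (Fin p) ℝ) (M : Matrix (Fin p) (Fin L) ℝ)
    (π : Fin L → ℝ) (hπ : ∀ ℓ, 0 < π ℓ) (hSw : Sw.PosDef) :
    let S := Sw + M * Matrix.diagonal π * Mᵀ
    let B := S⁻¹ * M * Matrix.diagonal π
    ∀ k ℓ : Fin L,
      |(fun i => M i k) ⬝ᵥ (fun i => B i ℓ)| ≤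
        π ℓ * Real.sqrt ((fun i => M i k) ⬝ᵥ Sw⁻¹ *ᵥ (fun i => M i k)) *
          Real.sqrt ((fun i => M i ℓ) ⬝ᵥ Sw⁻¹ *ᵥ (fun i => M i ℓ)) := by
  intro S B k ℓ
  have hD : (Matrix.diagonal π).PosSemidef :=
    Matrix.PosSemidef.diagonal (fun i => (hπ i).le)
  have hMDMt : (M * Matrix.diagonal π * Mᵀ).PosSemidef := by
    simpa using hD.mul_mul_conjTranspose_same M
  have hS : S.PosDef := hSw.add_posSemidef hMDMt
  have hdiff : (S - Sw).PosSemidef := by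
    have : S - Sw = M * Matrix.diagonal π * Mᵀ := by simp [S]
    rw [this]; exact hMDMt
  have hcol : (fun i => B i ℓ) = fun i => π ℓ * (S⁻¹ *ᵥ (fun j => M j ℓ)) i := by
    funext i
    simp only [B, Matrix.mul_apply, Matrix.mulVec, dotProduct, Matrix.diagonal,
      Matrix.of_apply, Finset.mul_sum]
    rw [Finset.sum_eq_single ℓ (by intro b _ hb; simp [hb]) (by simp)]
    simp only [if_pos rfl, Finset.sum_mul]
    exact Finset.sum_congr rfl fun j _ => by simp [mul_comm]
  have hdot : (fun i => M i k) ⬝ᵥ (fun i => B i ℓ) =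
      π ℓ * ((fun i => M i k) ⬝ᵥ S⁻¹ *ᵥ (fun i => M i ℓ)) := by
    rw [hcol]
    simp only [dotProduct, Finset.mul_sum]
    exact Finset.sum_congr rfl fun i _ => by ring
  have hcs := matCS hS.inv.posSemidef (fun i => M i k) (fun i => M i ℓ)
  have hk := invLe hS hSw hdiff (fun i => M i k)
  have hl := invLe hS hSw hdiff (fun i => M i ℓ)
  have hk0 : 0 ≤ (fun i => M i k) ⬝ᵥ S⁻¹ *ᵥ (fun i => M i k) := by
    simpa using hS.inv.posSemidef.dotProduct_mulVec_nonneg (fun i => M i k)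
  have hl0 : 0 ≤ (fun i => M i ℓ) ⬝ᵥ S⁻¹ *ᵥ (fun i => M i ℓ) := by
    simpa using hS.inv.posSemidef.dotProduct_mulVec_nonneg (fun i => M i ℓ)
  rw [hdot, abs_mul, abs_of_pos (hπ ℓ), mul_assoc]
  refine mul_le_mul_of_nonneg_left ?_ (hπ ℓ).le
  calc |(fun i => M i k) ⬝ᵥ S⁻¹ *ᵥ (fun i => M i ℓ)|
      ≤ Real.sqrt ((fun i => M i k) ⬝ᵥ S⁻¹ *ᵥ (fun i => M i k)) *
        Real.sqrt ((fun i => M i ℓ) ⬝ᵥ S⁻¹ *ᵥ (fun i => M i ℓ)) := hcs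
    _ ≤ Real.sqrt ((fun i => M i k) ⬝ᵥ Sw⁻¹ *ᵥ (fun i => M i k)) *
        Real.sqrt ((fun i => M i ℓ) ⬝ᵥ Sw⁻¹ *ᵥ (fun i => M i ℓ)) :=
      mul_le_mul (Real.sqrt_le_sqrt hk) (Real.sqrt_le_sqrt hl) (Real.sqrt_nonneg _)
        (Real.sqrt_nonneg _)
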